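/- The set S of s-terminal Hamming sources of length n has cardinality (s·n + 1)·2^n when s > 2, and (n + 1)·2^n when s = 2. -/

import Mathlib

/-- Hamming weight of a binary vector. -/
def wt {n : ℕ} (v : Fin n → ZMod 2) : ℕ := (Finset.univ.filter fun j => v j ≠ 0).card

/-- The set of `s`-terminal Hamming sources of length `n`: tuples `(b+v₁,…,b+v_s)`
with `b ∈ F₂ⁿ` and total Hamming weight of the `vᵢ` at most 1. -/
def hammingS (s n : ℕ) : Set (Fin s → Fin n → ZMod 2) :=
  {x | ∃ (b : Fin n → ZMod 2) (v : Fin s → Fin n → ZMod 2),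
    (∀ i, x i = b + v i) ∧ (∑ i, wt (v i)) ≤ 1}

lemma wt_zero_iff {n : ℕ} (v : Fin n → ZMod 2) : wt v = 0 ↔ v = 0 := by
  simp [wt, Finset.filter_eq_empty_iff, funext_iff]

lemma wt_single {n : ℕ} (j : Fin n) : wt (Pi.single j (1 : ZMod 2)) = 1 := by
  have : (Finset.univ.filter fun k => (Pi.single j 1 : Fin n → ZMod 2) k ≠ 0) = {j} := by
    ext k
    simp [Pi.single_apply]
  simp [wt, this]

lemma zmod2_ne_zero {a : ZMod 2} (h : a ≠ 0) : a = 1 := by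
  revert a; decide

lemma wt_le_one {n : ℕ} {v : Fin n → ZMod 2} (h : wt v ≤ 1) (hv : v ≠ 0) :
    ∃ j, v = Pi.single j 1 := by
  have h0 : ∃ j, v j ≠ 0 := by
    by_contra hc; push_neg at hc; exact hv (funext fun j => hc j)
  obtain ⟨j, hj⟩ := h0
  have hmem : j ∈ Finset.univ.filter fun k => v k ≠ 0 := by simp [hj]
  have h1 : (Finset.univ.filter fun k => v k ≠ 0) = {j} := by
    apply Finset.eq_singleton_iff_unique_mem.mpr
    refine ⟨hmem, fun k hk => ?_⟩
    by_contra hkj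
    have : 2 ≤ wt v := by
      have : ({k, j} : Finset (Fin n)) ⊆ Finset.univ.filter fun k => v k ≠ 0 := by
        intro x hx; simp at hx; rcases hx with rfl | rfl
        · exact hk
        · exact hmem
      calc 2 = ({k, j} : Finset (Fin n)).card := by rw [Finset.card_insert_of_notMem (by simp [hkj]), Finset.card_singleton]
        _ ≤ _ := Finset.card_le_card this
    omega
  refine ⟨j, funext fun k => ?_⟩
  rcases eq_or_ne k j with rfl | hkj
  · simp [zmod2_ne_zero hj]
  · have : v k = 0 := by
      by_contra hc
      have : k ∈ ({j} : Finset (Fin n)) := h1 ▸ (by simp [hc])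
      simp at this; exact hkj this
    simp [this, Pi.single_apply, hkj]

lemma decompose {s n : ℕ} {v : Fin s → Fin n → ZMod 2} (h : (∑ i, wt (v i)) ≤ 1) :
    (∀ i, v i = 0) ∨ ∃ i j, v i = Pi.single j 1 ∧ ∀ k, k ≠ i → v k = 0 := by
  by_cases hall : ∀ i, v i = 0
  · exact Or.inl hall
  push_neg at hall
  obtain ⟨i, hi⟩ := hall
  have hwi : wt (v i) ≤ 1 := le_trans (Finset.single_le_sum (f := fun i => wt (v i)) (fun _ _ => Nat.zero_le _) (Finset.mem_univ i)) h
  obtain ⟨j, hj⟩ := wt_le_one hwi hi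
  refine Or.inr ⟨i, j, hj, fun k hk => ?_⟩
  have h2 : wt (v i) + wt (v k) ≤ ∑ i, wt (v i) := by
    have heq := Finset.add_sum_erase Finset.univ (fun i => wt (v i)) (Finset.mem_univ i)
    have h3 : wt (v k) ≤ ∑ x ∈ Finset.univ.erase i, wt (v x) :=
      Finset.single_le_sum (f := fun i => wt (v i)) (fun _ _ => Nat.zero_le _) (Finset.mem_erase.mpr ⟨hk, Finset.mem_univ k⟩)
    try simp only [] at heq
    omega
  have hwi1 : wt (v i) = 1 := by rw [hj, wt_single]
  have : wt (v k) = 0 := by omega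
  exact (wt_zero_iff _).mp this

lemma single_ne_zero' {n : ℕ} (j : Fin n) : (Pi.single j 1 : Fin n → ZMod 2) ≠ 0 := by
  intro h
  have := congrFun h j
  simp at this

/-- big map -/
def fbig (s n : ℕ) : (Fin n → ZMod 2) × Option (Fin s × Fin n) → (Fin s → Fin n → ZMod 2)
  | (b, none) => fun _ => b
  | (b, some (i, j)) => fun k => if k = i then b + Pi.single j 1 else b

lemma fbig_mem (s n : ℕ) (p : (Fin n → ZMod 2) × Option (Fin s × Fin n)) :
    fbig s n p ∈ hammingS s n := by
  obtain ⟨b, o⟩ := p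
  match o with
  | none => exact ⟨b, 0, fun i => by simp [fbig], by simp [(wt_zero_iff (0 : Fin n → ZMod 2)).mpr rfl]⟩
  | some (i, j) =>
      refine ⟨b, fun k => if k = i then Pi.single j 1 else 0, fun k => ?_, ?_⟩
      · by_cases h : k = i <;> simp [fbig, h]
      · have : ∀ k : Fin s, wt (if k = i then (Pi.single j 1 : Fin n → ZMod 2) else 0)
            = if k = i then 1 else 0 := by
          intro k; by_cases h : k = i <;> simp [h, wt_single, (wt_zero_iff _).mpr rfl]
        simp [this]

lemma fbig_inj (s n : ℕ) (hs : 2 < s) : Function.Injective (fbig s n) := by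
  have hex : ∀ i : Fin s, ∃ k : Fin s, k ≠ i := by
    intro i
    haveI : Nontrivial (Fin s) := ⟨⟨⟨0, by omega⟩, ⟨1, by omega⟩, by simp [Fin.ext_iff]⟩⟩
    exact exists_ne i
  have hex2 : ∀ i i' : Fin s, ∃ k : Fin s, k ≠ i ∧ k ≠ i' := by
    intro i i'
    by_contra hc
    push_neg at hc
    have hsub : (Finset.univ : Finset (Fin s)) ⊆ {i, i'} := by
      intro k _
      by_cases h : k = i
      · simp [h]
      · simp [hc k h]
    have := Finset.card_le_card hsub
    have h2 : ({i, i'} : Finset (Fin s)).card ≤ 2 := Finset.card_insert_le _ _ |>.trans (by simp)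
    simp [Finset.card_univ] at this
    omega
  rintro ⟨b, o⟩ ⟨b', o'⟩ h
  match o, o' with
  | none, none =>
      have := congrFun h ⟨0, by omega⟩
      simp [fbig] at this
      simp [this]
  | none, some (i, j) =>
      exfalso
      obtain ⟨k, hk⟩ := hex i
      have h1 := congrFun (congrFun h k)
      have h2 := congrFun (congrFun h i)
      simp [fbig, hk] at h1 h2
      have : (Pi.single j 1 : Fin n → ZMod 2) = 0 := by
        funext m
        have := h2 m
        have h1m := h1 m
        simp [h1m] at this
        simp [this]
      exact single_ne_zero' j this
  | some (i, j), none =>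
      exfalso
      obtain ⟨k, hk⟩ := hex i
      have h1 := congrFun (congrFun h k)
      have h2 := congrFun (congrFun h i)
      simp [fbig, hk] at h1 h2
      have : (Pi.single j 1 : Fin n → ZMod 2) = 0 := by
        funext m
        have := h2 m
        have h1m := h1 m
        simp [← h1m] at this
        simp [this]
      exact single_ne_zero' j this
  | some (i, j), some (i', j') =>
      by_cases hii : i = i'
      · subst hii
        obtain ⟨k, hk⟩ := hex i
        have h1 := congrFun h k
        simp [fbig, hk] at h1
        subst h1
        have h2 := congrFun h i
        simp [fbig] at h2
        have : j = j' := by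
          by_contra hjj
          have := congrFun h2 j
          simp [Pi.single_apply, hjj, Ne.symm hjj] at this
        simp [this]
      · exfalso
        obtain ⟨k, hk, hk'⟩ := hex2 i i'
        have h0 := congrFun h k
        simp [fbig, hk, hk'] at h0
        subst h0
        have h1 := congrFun h i
        simp [fbig, hii] at h1
        try exact single_ne_zero' j (by simpa using h1)

lemma fbig_surj (s n : ℕ) : hammingS s n ⊆ Set.range (fbig s n) := by
  rintro x ⟨b, v, hx, hsum⟩
  rcases decompose hsum with hall | ⟨i, j, hij, hrest⟩
  · exact ⟨(b, none), funext fun k => by simp [fbig, hx k, hall k]⟩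
  · refine ⟨(b, some (i, j)), funext fun k => ?_⟩
    by_cases h : k = i
    · subst h; simp [fbig, hx k, hij]
    · simp [fbig, h, hx k, hrest k h]

lemma range_fbig (s n : ℕ) : Set.range (fbig s n) = hammingS s n :=
  Set.Subset.antisymm (Set.range_subset_iff.mpr (fbig_mem s n)) (fbig_surj s n)

lemma add_self_pi {n : ℕ} (w : Fin n → ZMod 2) : w + w = 0 := by
  funext m
  simp only [Pi.add_apply, Pi.zero_apply]
  exact CharTwo.add_self_eq_zero _

def ftwo (n : ℕ) : (Fin n → ZMod 2) × Option (Fin n) → (Fin 2 → Fin n → ZMod 2)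
  | (b, none) => fun _ => b
  | (b, some j) => fun k => if k = 0 then b else b + Pi.single j 1

lemma ftwo_mem (n : ℕ) (p : (Fin n → ZMod 2) × Option (Fin n)) :
    ftwo n p ∈ hammingS 2 n := by
  obtain ⟨b, o⟩ := p
  match o with
  | none => exact ⟨b, 0, fun i => by simp [ftwo], by simp [(wt_zero_iff (0 : Fin n → ZMod 2)).mpr rfl]⟩
  | some j =>
      refine ⟨b, fun k => if k = 0 then 0 else Pi.single j 1, fun k => ?_, ?_⟩
      · by_cases h : k = 0 <;> simp [ftwo, h]
      · rw [Fin.sum_univ_two]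
        simp [wt_single, (wt_zero_iff (0 : Fin n → ZMod 2)).mpr rfl]

lemma ftwo_inj (n : ℕ) : Function.Injective (ftwo n) := by
  rintro ⟨b, o⟩ ⟨b', o'⟩ h
  have h0 := congrFun h 0
  have h1 := congrFun h 1
  match o, o' with
  | none, none =>
      simp [ftwo] at h0
      simp [h0]
  | none, some j =>
      exfalso
      simp [ftwo] at h0 h1
      rw [h0] at h1
      exact single_ne_zero' j (by simpa using h1.symm)
  | some j, none =>
      exfalso
      simp [ftwo] at h0 h1
      rw [h0] at h1
      exact single_ne_zero' j (by simpa using h1)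
  | some j, some j' =>
      simp [ftwo] at h0 h1
      subst h0
      have : j = j' := by
        by_contra hjj
        have := congrFun h1 j
        simp [Pi.single_apply, hjj, Ne.symm hjj] at this
      simp [this]

lemma ftwo_surj (n : ℕ) : hammingS 2 n ⊆ Set.range (ftwo n) := by
  rintro x ⟨b, v, hx, hsum⟩
  have hfin2 : ∀ k : Fin 2, k ≠ 0 → k = 1 := by decide
  rcases decompose hsum with hall | ⟨i, j, hij, hrest⟩
  · exact ⟨(b, none), funext fun k => by simp [ftwo, hx k, hall k]⟩
  · by_cases hi : i = 0
    · subst hi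
      refine ⟨(b + Pi.single j 1, some j), funext fun k => ?_⟩
      by_cases h : k = 0
      · subst h; simp [ftwo, hx 0, hij]
      · rw [hfin2 k h]
        have : x 1 = b := by rw [hx 1, hrest 1 (by simp), add_zero]
        rw [this]
        simp [ftwo]
        rw [add_assoc]
        rw [add_self_pi]
        simp
    · have hi1 : i = 1 := hfin2 i hi
      subst hi1
      refine ⟨(b, some j), funext fun k => ?_⟩
      by_cases h : k = 0
      · subst h; simp [ftwo, hx 0, hrest 0 (by simp)]
      · rw [hfin2 k h]
        simp [ftwo, hx 1, hij]

lemma range_ftwo (n : ℕ) : Set.range (ftwo n) = hammingS 2 n :=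
  Set.Subset.antisymm (Set.range_subset_iff.mpr (ftwo_mem n)) (ftwo_surj n)

/-- The set of `s`-terminal Hamming sources of length `n` has cardinality
`(s·n + 1)·2^n` when `s > 2`, and `(n + 1)·2^n` when `s = 2`. -/
theorem stmt_6 (s n : ℕ) :
    (2 < s → Nat.card (hammingS s n) = (s * n + 1) * 2 ^ n) ∧
    (s = 2 → Nat.card (hammingS s n) = (n + 1) * 2 ^ n) := by
  constructor
  · intro hs
    rw [← range_fbig s n, Nat.card_range_of_injective (fbig_inj s n hs)]
    simp [Nat.card_eq_fintype_card, ZMod.card]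
    ring
  · rintro rfl
    rw [← range_ftwo n, Nat.card_range_of_injective (ftwo_inj n)]
    simp [Nat.card_eq_fintype_card, ZMod.card]
    ring
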